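/- For every integer k ≥ 4, the number r_k^{MSO;tr} of equivalence classes of finite rooted trees under ≡_k^{MSO;tr} satisfies r_k^{MSO;tr} ≤ T(k + 2 + log*(k)). -/

import Mathlib

/-- The tower function: `tower 1 = 2` and `tower (s+1) = 2 ^ tower s`. -/
def tower : ℕ → ℕ
  | 0 => 1
  | s + 1 => 2 ^ tower s

/-- `logStar k = min { i | tower i ≥ k }`. -/
noncomputable def logStar (k : ℕ) : ℕ := sInf {i : ℕ | k ≤ tower i}

/-- A finite rooted tree: a tree on `Fin n` together with a distinguished root. -/
structure FinRootedTree where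
  n : ℕ
  graph : SimpleGraph (Fin n)
  isTree : graph.IsTree
  root : Fin n

/-- The parent–child relation of a rooted tree: `x` is the parent of `y`. -/
def FinRootedTree.parent (T : FinRootedTree) (x y : Fin T.n) : Prop :=
  T.graph.Adj x y ∧ T.graph.dist T.root y = T.graph.dist T.root x + 1

open scoped Classical

def oFind {n : ℕ} (p : Fin n → Prop) [DecidablePred p] : Option (Fin n) :=
  if h : ∃ k, p k then some (Fin.find p h) else none

lemma oFind_eq_none_iff {n : ℕ} {p : Fin n → Prop} [DecidablePred p] :
    oFind p = none ↔ ∀ i, ¬ p i := by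
  unfold oFind; split_ifs with h
  · simp only [reduceCtorEq, false_iff, not_forall, not_not]; exact h
  · push_neg at h; simpa using h

lemma oFind_isSome_iff {n : ℕ} {p : Fin n → Prop} [DecidablePred p] :
    (oFind p).isSome ↔ ∃ i, p i := by
  unfold oFind; split_ifs with h <;> simp [h]

lemma oFind_spec {n : ℕ} (p : Fin n → Prop) [DecidablePred p] {i : Fin n}
    (hi : i ∈ oFind p) : p i := by
  unfold oFind at hi; split_ifs at hi with h
  · cases Option.mem_def.mp hi; exact Fin.find_spec h
  · simp at hi

lemma oFind_min {n : ℕ} {p : Fin n → Prop} [DecidablePred p] {i : Fin n}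
    (hi : i ∈ oFind p) {j : Fin n} (hj : j < i) : ¬ p j := by
  unfold oFind at hi; split_ifs at hi with h
  · cases Option.mem_def.mp hi; exact Fin.find_min h hj
  · simp at hi

/-! ### parent uniqueness -/

lemma parent_unique (T : FinRootedTree) {x x' y : Fin T.n}
    (h : T.parent x y) (h' : T.parent x' y) : x = x' := by
  obtain ⟨hxy, hdy⟩ := h
  obtain ⟨hx'y, hdy'⟩ := h'
  have key : ∀ z : Fin T.n, T.graph.Adj z y →
      T.graph.dist T.root y = T.graph.dist T.root z + 1 →
      ∃ q : T.graph.Walk T.root y, q.IsPath ∧ q.reverse.getVert 1 = z := by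
    intro z hz hdz
    obtain ⟨p, hp, hlen⟩ := (T.isTree.isConnected.preconnected T.root z).exists_path_of_dist
    have hy : y ∉ p.support := by
      intro hy
      have h1 : T.graph.dist T.root y ≤ (p.takeUntil y hy).length := SimpleGraph.dist_le _
      have h2 : (p.takeUntil y hy).length ≤ p.length := SimpleGraph.Walk.length_takeUntil_le _ _
      omega
    refine ⟨p.concat hz, ?_, ?_⟩
    · rw [← SimpleGraph.Walk.isPath_reverse_iff, SimpleGraph.Walk.reverse_concat,
        SimpleGraph.Walk.cons_isPath_iff]
      exact ⟨hp.reverse, by simpa using hy⟩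
    · rw [SimpleGraph.Walk.reverse_concat,
        SimpleGraph.Walk.getVert_cons _ _ (by norm_num)]
      simp
  obtain ⟨q, hq, hzq⟩ := key x hxy hdy
  obtain ⟨q', hq', hzq'⟩ := key x' hx'y hdy'
  have hpq : (⟨q, hq⟩ : T.graph.Path T.root y) = ⟨q', hq'⟩ :=
    SimpleGraph.isAcyclic_iff_path_unique.mp T.isTree.IsAcyclic _ _
  have hqq : q = q' := congrArg Subtype.val hpq
  rw [← hzq, ← hzq', hqq]

/-! ### atomic encoding -/

abbrev AtomCode (n m : ℕ) : Type :=
  (t : Fin (n+1)) → (Fin t.val ⊕ (Option (Fin (n+1)) × (Fin m → Bool)))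

def tmv (T : FinRootedTree) {n : ℕ} (v : Fin n → Fin T.n) : Fin (n+1) → Fin T.n :=
  Fin.cases T.root v

def castI {n : ℕ} (t : Fin (n+1)) (i : Fin t.val) : Fin (n+1) :=
  ⟨i.val, i.isLt.trans t.isLt⟩

noncomputable def encode (T : FinRootedTree) {n m : ℕ} (v : Fin n → Fin T.n)
    (s : Fin m → Set (Fin T.n)) : AtomCode n m := fun t =>
  match oFind (fun i : Fin t.val => tmv T v (castI t i) = tmv T v t) with
  | some i => Sum.inl i
  | none => Sum.inr (oFind (fun p : Fin (n+1) => T.parent (tmv T v p) (tmv T v t)),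
      fun j => decide (tmv T v t ∈ s j))

def rep {n m : ℕ} (e : AtomCode n m) (t : Fin (n+1)) : Fin (n+1) :=
  match e t with
  | Sum.inl i => castI t i
  | Sum.inr _ => t

def memX {n m : ℕ} (e : AtomCode n m) (a : Fin (n+1)) (j : Fin m) : Bool :=
  match e (rep e a) with
  | Sum.inl _ => false
  | Sum.inr (_, mb) => mb j

def parX {n m : ℕ} (e : AtomCode n m) (a b : Fin (n+1)) : Prop :=
  match e (rep e b) with
  | Sum.inl _ => False
  | Sum.inr (po, _) => ∃ p, po = some p ∧ rep e p = rep e a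

section AtomLemmas

variable (T : FinRootedTree) {n m : ℕ} (v : Fin n → Fin T.n) (s : Fin m → Set (Fin T.n))

lemma encode_apply (t : Fin (n+1)) : encode T v s t =
    match oFind (fun i : Fin t.val => tmv T v (castI t i) = tmv T v t) with
    | some i => Sum.inl i
    | none => Sum.inr (oFind (fun p : Fin (n+1) => T.parent (tmv T v p) (tmv T v t)),
        fun j => decide (tmv T v t ∈ s j)) := rfl

lemma rep_spec (t : Fin (n+1)) :
    tmv T v (rep (encode T v s) t) = tmv T v t ∧
      ∀ u : Fin (n+1), tmv T v u = tmv T v t → (rep (encode T v s) t).val ≤ u.val := by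
  unfold rep
  cases hf : oFind (fun i : Fin t.val => tmv T v (castI t i) = tmv T v t) with
  | none =>
    rw [encode_apply T v s t, hf]
    have hnone := oFind_eq_none_iff.mp hf
    refine ⟨rfl, fun u hu => ?_⟩
    by_contra hc
    push_neg at hc
    exact hnone ⟨u.val, hc⟩ (by
      have : castI t ⟨u.val, hc⟩ = u := by ext; rfl
      rw [this]; exact hu)
  | some i =>
    rw [encode_apply T v s t, hf]
    have hi : tmv T v (castI t i) = tmv T v t :=
      oFind_spec (fun i : Fin t.val => tmv T v (castI t i) = tmv T v t)
        (Option.mem_def.mpr hf)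
    refine ⟨hi, fun u hu => ?_⟩
    by_contra hc
    push_neg at hc
    have hu' : u.val < t.val := lt_trans hc i.isLt
    have : ¬ tmv T v (castI t ⟨u.val, hu'⟩) = tmv T v t :=
      oFind_min (Option.mem_def.mpr hf) (show (⟨u.val, hu'⟩ : Fin t.val) < i from hc)
    exact this (by
      have : castI t ⟨u.val, hu'⟩ = u := by ext; rfl
      rw [this]; exact hu)

lemma rep_tm (t : Fin (n+1)) : tmv T v (rep (encode T v s) t) = tmv T v t :=
  (rep_spec T v s t).1

lemma rep_eq_iff (a b : Fin (n+1)) :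
    tmv T v a = tmv T v b ↔ rep (encode T v s) a = rep (encode T v s) b := by
  constructor
  · intro h
    apply Fin.ext
    apply le_antisymm
    · exact (rep_spec T v s a).2 _ (by rw [rep_tm, h])
    · exact (rep_spec T v s b).2 _ (by rw [rep_tm, h])
  · intro h
    rw [← rep_tm T v s a, ← rep_tm T v s b, h]

lemma encode_rep_eq (t : Fin (n+1)) :
    encode T v s (rep (encode T v s) t) =
      Sum.inr (oFind (fun p : Fin (n+1) =>
          T.parent (tmv T v p) (tmv T v (rep (encode T v s) t))),
        fun j => decide (tmv T v (rep (encode T v s) t) ∈ s j)) := by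
  rw [encode_apply]
  have : oFind (fun i : Fin (rep (encode T v s) t).val =>
      tmv T v (castI _ i) = tmv T v (rep (encode T v s) t)) = none := by
    rw [oFind_eq_none_iff]
    intro i hi
    have h1 : tmv T v (castI (rep (encode T v s) t) i) = tmv T v t := by
      rw [hi, rep_tm]
    have h2 := (rep_spec T v s t).2 _ h1
    have : (castI (rep (encode T v s) t) i).val = i.val := rfl
    omega
  rw [this]

lemma mem_iff (a : Fin (n+1)) (j : Fin m) :
    tmv T v a ∈ s j ↔ memX (encode T v s) a j = true := by
  unfold memX
  rw [encode_rep_eq]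
  simp only [decide_eq_true_eq]
  rw [rep_tm]

lemma par_iff (a b : Fin (n+1)) :
    T.parent (tmv T v a) (tmv T v b) ↔ parX (encode T v s) a b := by
  unfold parX
  rw [encode_rep_eq]
  constructor
  · intro hp
    have hp' : T.parent (tmv T v a) (tmv T v (rep (encode T v s) b)) := by
      rw [rep_tm]; exact hp
    have hsome : (oFind (fun p : Fin (n+1) =>
        T.parent (tmv T v p) (tmv T v (rep (encode T v s) b)))).isSome := by
      rw [oFind_isSome_iff]; exact ⟨a, hp'⟩
    obtain ⟨p, hfp⟩ := Option.isSome_iff_exists.mp hsome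
    have hqp : T.parent (tmv T v p) (tmv T v (rep (encode T v s) b)) :=
      oFind_spec (fun p : Fin (n+1) =>
        T.parent (tmv T v p) (tmv T v (rep (encode T v s) b))) (Option.mem_def.mpr hfp)
    have : tmv T v p = tmv T v a := parent_unique T hqp hp'
    exact ⟨p, hfp, (rep_eq_iff T v s p a).mp this⟩
  · rintro ⟨p, hfp, hr⟩
    have hqp : T.parent (tmv T v p) (tmv T v (rep (encode T v s) b)) :=
      oFind_spec (fun p : Fin (n+1) =>
        T.parent (tmv T v p) (tmv T v (rep (encode T v s) b))) (Option.mem_def.mpr hfp)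
    rw [rep_tm] at hqp
    have : tmv T v p = tmv T v a := (rep_eq_iff T v s p a).mpr hr
    rwa [this] at hqp

end AtomLemmas

/-- MSO formulas in the language of rooted trees (parent–child relation `P`,
equality, and root constant, interpreted as `none`) with `n` free vertex
variables and `m` free set variables. -/
inductive TreeForm : ℕ → ℕ → Type
  | par {n m : ℕ} : Option (Fin n) → Option (Fin n) → TreeForm n m
  | eq  {n m : ℕ} : Option (Fin n) → Option (Fin n) → TreeForm n m
  | mem {n m : ℕ} : Option (Fin n) → Fin m → TreeForm n m
  | not {n m : ℕ} : TreeForm n m → TreeForm n m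
  | and {n m : ℕ} : TreeForm n m → TreeForm n m → TreeForm n m
  | allV {n m : ℕ} : TreeForm (n + 1) m → TreeForm n m
  | allS {n m : ℕ} : TreeForm n (m + 1) → TreeForm n m

/-- Quantifier depth of an MSO rooted-tree formula. -/
def TreeForm.depth : ∀ {n m : ℕ}, TreeForm n m → ℕ
  | _, _, .par _ _ => 0
  | _, _, .eq _ _ => 0
  | _, _, .mem _ _ => 0
  | _, _, .not φ => φ.depth
  | _, _, .and φ ψ => max φ.depth ψ.depth
  | _, _, .allV φ => φ.depth + 1
  | _, _, .allS φ => φ.depth + 1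

/-- Interpretation of a term (a variable or the root constant). -/
def interpTerm {V : Type} (r : V) {n : ℕ} (v : Fin n → V) : Option (Fin n) → V
  | some i => v i
  | none => r

/-- Satisfaction of an MSO rooted-tree formula on a finite rooted tree. -/
def TreeForm.Sat (T : FinRootedTree) :
    ∀ {n m : ℕ}, TreeForm n m → (Fin n → Fin T.n) → (Fin m → Set (Fin T.n)) → Prop
  | _, _, .par a b, v, _ => T.parent (interpTerm T.root v a) (interpTerm T.root v b)
  | _, _, .eq a b, v, _ => interpTerm T.root v a = interpTerm T.root v b
  | _, _, .mem a j, v, s => interpTerm T.root v a ∈ s j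
  | _, _, .not φ, v, s => ¬ TreeForm.Sat T φ v s
  | _, _, .and φ ψ, v, s => TreeForm.Sat T φ v s ∧ TreeForm.Sat T ψ v s
  | _, _, .allV φ, v, s => ∀ x, TreeForm.Sat T φ (Fin.snoc v x) s
  | _, _, .allS φ, v, s => ∀ X, TreeForm.Sat T φ v (Fin.snoc s X)

/-! ### the type space and theory maps -/

def TS : ℕ → ℕ → ℕ → Type
  | 0, n, m => AtomCode n m
  | j+1, n, m => AtomCode n m × (TS j (n+1) m → Bool) × (TS j n (m+1) → Bool)

noncomputable def theory : (j : ℕ) → {n m : ℕ} → (T : FinRootedTree) →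
    (Fin n → Fin T.n) → (Fin m → Set (Fin T.n)) → TS j n m
  | 0, _, _, T, v, s => encode T v s
  | j+1, _, _, T, v, s =>
      (encode T v s,
       fun τ => decide (∃ x, theory j T (Fin.snoc v x) s = τ),
       fun τ => decide (∃ X, theory j T v (Fin.snoc s X) = τ))

lemma encode_of_theory {j n m : ℕ} {T T' : FinRootedTree}
    {v : Fin n → Fin T.n} {s : Fin m → Set (Fin T.n)}
    {v' : Fin n → Fin T'.n} {s' : Fin m → Set (Fin T'.n)}
    (h : theory j T v s = theory j T' v' s') : encode T v s = encode T' v' s' := by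
  cases j with
  | zero => exact h
  | succ j => exact congrArg (fun z : TS (j+1) n m => z.1) h

def idx {n : ℕ} (o : Option (Fin n)) : Fin (n+1) :=
  match o with
  | none => 0
  | some i => i.succ

lemma tmv_idx (T : FinRootedTree) {n : ℕ} (v : Fin n → Fin T.n) (o : Option (Fin n)) :
    tmv T v (idx o) = interpTerm T.root v o := by
  cases o <;> simp [tmv, idx, interpTerm]

lemma satIff {n₀ m₀ : ℕ} (φ : TreeForm n₀ m₀) : ∀ (j : ℕ), φ.depth ≤ j →
    ∀ (T T' : FinRootedTree) (v : Fin n₀ → Fin T.n) (s : Fin m₀ → Set (Fin T.n))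
      (v' : Fin n₀ → Fin T'.n) (s' : Fin m₀ → Set (Fin T'.n)),
      theory j T v s = theory j T' v' s' →
      (φ.Sat T v s ↔ φ.Sat T' v' s') := by
  induction φ with
  | @par n m a b =>
    intro j hj T T' v s v' s' h
    have he : encode T v s = encode T' v' s' := encode_of_theory h
    show T.parent (interpTerm T.root v a) (interpTerm T.root v b) ↔
      T'.parent (interpTerm T'.root v' a) (interpTerm T'.root v' b)
    rw [← tmv_idx T v a, ← tmv_idx T v b, ← tmv_idx T' v' a, ← tmv_idx T' v' b,
      par_iff T v s, par_iff T' v' s', he]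
  | @eq n m a b =>
    intro j hj T T' v s v' s' h
    have he : encode T v s = encode T' v' s' := encode_of_theory h
    show interpTerm T.root v a = interpTerm T.root v b ↔
      interpTerm T'.root v' a = interpTerm T'.root v' b
    rw [← tmv_idx T v a, ← tmv_idx T v b, ← tmv_idx T' v' a, ← tmv_idx T' v' b,
      rep_eq_iff T v s, rep_eq_iff T' v' s', he]
  | @mem n m a i =>
    intro j hj T T' v s v' s' h
    have he : encode T v s = encode T' v' s' := encode_of_theory h
    show interpTerm T.root v a ∈ s i ↔ interpTerm T'.root v' a ∈ s' i
    rw [← tmv_idx T v a, ← tmv_idx T' v' a, mem_iff T v s, mem_iff T' v' s', he]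
  | @not n m ψ ih =>
    intro j hj T T' v s v' s' h
    have := ih j (by simpa [TreeForm.depth] using hj) T T' v s v' s' h
    show ¬ ψ.Sat T v s ↔ ¬ ψ.Sat T' v' s'
    exact not_congr this
  | @and n m ψ χ ihψ ihχ =>
    intro j hj T T' v s v' s' h
    simp only [TreeForm.depth, max_le_iff] at hj
    have h1 := ihψ j hj.1 T T' v s v' s' h
    have h2 := ihχ j hj.2 T T' v s v' s' h
    show ψ.Sat T v s ∧ χ.Sat T v s ↔ ψ.Sat T' v' s' ∧ χ.Sat T' v' s'
    exact and_congr h1 h2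
  | @allV n m ψ ih =>
    intro j hj T T' v s v' s' h
    cases j with
    | zero => simp [TreeForm.depth] at hj
    | succ j =>
      have hd : ψ.depth ≤ j := by simpa [TreeForm.depth] using hj
      have h' : ((encode T v s,
            fun τ => decide (∃ x, theory j T (Fin.snoc v x) s = τ),
            fun τ => decide (∃ X, theory j T v (Fin.snoc s X) = τ)) :
            AtomCode n m × (TS j (n+1) m → Bool) × (TS j n (m+1) → Bool)) =
          (encode T' v' s',
            fun τ => decide (∃ x, theory j T' (Fin.snoc v' x) s' = τ),
            fun τ => decide (∃ X, theory j T' v' (Fin.snoc s' X) = τ)) := h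
      injection h' with ha hbc
      injection hbc with h2 h3
      show (∀ x, ψ.Sat T (Fin.snoc v x) s) ↔ (∀ x, ψ.Sat T' (Fin.snoc v' x) s')
      constructor
      · intro hs x
        have hx := congrFun h2 (theory j T' (Fin.snoc v' x) s')
        rw [decide_eq_decide] at hx
        obtain ⟨x0, hx0⟩ := hx.mpr ⟨x, rfl⟩
        exact (ih j hd T T' (Fin.snoc v x0) s (Fin.snoc v' x) s' hx0).mp (hs x0)
      · intro hs x
        have hx := congrFun h2 (theory j T (Fin.snoc v x) s)
        rw [decide_eq_decide] at hx
        obtain ⟨x0, hx0⟩ := hx.mp ⟨x, rfl⟩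
        exact (ih j hd T T' (Fin.snoc v x) s (Fin.snoc v' x0) s' hx0.symm).mpr (hs x0)
  | @allS n m ψ ih =>
    intro j hj T T' v s v' s' h
    cases j with
    | zero => simp [TreeForm.depth] at hj
    | succ j =>
      have hd : ψ.depth ≤ j := by simpa [TreeForm.depth] using hj
      have h' : ((encode T v s,
            fun τ => decide (∃ x, theory j T (Fin.snoc v x) s = τ),
            fun τ => decide (∃ X, theory j T v (Fin.snoc s X) = τ)) :
            AtomCode n m × (TS j (n+1) m → Bool) × (TS j n (m+1) → Bool)) =
          (encode T' v' s',
            fun τ => decide (∃ x, theory j T' (Fin.snoc v' x) s' = τ),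
            fun τ => decide (∃ X, theory j T' v' (Fin.snoc s' X) = τ)) := h
      injection h' with ha hbc
      injection hbc with h3 h2
      show (∀ X, ψ.Sat T v (Fin.snoc s X)) ↔ (∀ X, ψ.Sat T' v' (Fin.snoc s' X))
      constructor
      · intro hs X
        have hx := congrFun h2 (theory j T' v' (Fin.snoc s' X))
        rw [decide_eq_decide] at hx
        obtain ⟨X0, hX0⟩ := hx.mpr ⟨X, rfl⟩
        exact (ih j hd T T' v (Fin.snoc s X0) v' (Fin.snoc s' X) hX0).mp (hs X0)
      · intro hs X
        have hx := congrFun h2 (theory j T v (Fin.snoc s X))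
        rw [decide_eq_decide] at hx
        obtain ⟨X0, hX0⟩ := hx.mp ⟨X, rfl⟩
        exact (ih j hd T T' v (Fin.snoc s X) v' (Fin.snoc s' X0) hX0.symm).mpr (hs X0)

/-! ### cardinalities -/

lemma TS_finite : ∀ (j n m : ℕ), Finite (TS j n m) := by
  intro j
  induction j with
  | zero => intro n m; exact inferInstanceAs (Finite (AtomCode n m))
  | succ j ih =>
    intro n m
    haveI := ih (n+1) m
    haveI := ih n (m+1)
    exact inferInstanceAs
      (Finite (AtomCode n m × (TS j (n+1) m → Bool) × (TS j n (m+1) → Bool)))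

lemma card_atom (n m : ℕ) :
    Nat.card (AtomCode n m) = ∏ t : Fin (n+1), (t.val + (n+2) * 2^m) := by
  rw [Nat.card_eq_fintype_card, Fintype.card_pi]
  refine Finset.prod_congr rfl fun t _ => ?_
  simp [Fintype.card_sum, Fintype.card_prod, Fintype.card_option, Fintype.card_fun]

lemma card_TS_succ (j n m : ℕ) :
    Nat.card (TS (j+1) n m) =
      Nat.card (AtomCode n m) * (2 ^ Nat.card (TS j (n+1) m) * 2 ^ Nat.card (TS j n (m+1))) := by
  haveI := TS_finite j (n+1) m
  haveI := TS_finite j n (m+1)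
  have h : Nat.card (TS (j+1) n m) =
      Nat.card (AtomCode n m × (TS j (n+1) m → Bool) × (TS j n (m+1) → Bool)) := rfl
  rw [h, Nat.card_prod, Nat.card_prod, Nat.card_fun, Nat.card_fun]
  have hb : Nat.card Bool = 2 := by simp [Nat.card_eq_fintype_card]
  rw [hb]

/-! ### tower arithmetic -/

lemma tower_succ (s : ℕ) : tower (s+1) = 2 ^ tower s := rfl

lemma lt_tower_succ (s : ℕ) : tower s < tower (s+1) := by
  rw [tower_succ]; exact Nat.lt_two_pow_self

lemma tower_mono : Monotone tower :=
  monotone_nat_of_le_succ fun s => (lt_tower_succ s).le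

lemma lt_tower (s : ℕ) : s < tower s := by
  induction s with
  | zero => simp [tower]
  | succ s ih =>
    have := lt_tower_succ s
    omega

lemma le_tower_logStar (k : ℕ) : k ≤ tower (logStar k) := by
  have : logStar k ∈ {i : ℕ | k ≤ tower i} := Nat.sInf_mem ⟨k, (lt_tower k).le⟩
  exact this

lemma logStar_four : logStar 4 = 2 := by
  apply le_antisymm
  · exact Nat.sInf_le (by show 4 ≤ tower 2; decide)
  · by_contra hlt
    push_neg at hlt
    have h1 : logStar 4 ≤ 1 := by omega
    have h2 : 4 ≤ tower (logStar 4) := le_tower_logStar 4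
    have h3 : tower (logStar 4) ≤ tower 1 := tower_mono h1
    have : tower 1 = 2 := by decide
    omega

lemma logStar_ge_three {k : ℕ} (hk : 5 ≤ k) : 3 ≤ logStar k := by
  by_contra hlt
  push_neg at hlt
  have h1 : logStar k ≤ 2 := by omega
  have h2 : k ≤ tower (logStar k) := le_tower_logStar k
  have h3 : tower (logStar k) ≤ tower 2 := tower_mono h1
  have : tower 2 = 4 := by decide
  omega

lemma add_two_le_two_pow {k : ℕ} (hk : 2 ≤ k) : k + 2 ≤ 2^k := by
  induction k with
  | zero => omega
  | succ k ih =>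
    rcases Nat.lt_or_ge k 2 with h | h
    · interval_cases k <;> simp_all <;> omega
    · have := ih h
      have h2 : (2:ℕ)^k ≥ 1 := Nat.one_le_two_pow
      rw [pow_succ]
      omega

lemma sq_bound {k : ℕ} (hk : 17 ≤ k) : 3*(k+1)^2 + 2 ≤ 2^k := by
  induction k with
  | zero => omega
  | succ k ih =>
    rcases Nat.lt_or_ge k 17 with h | h
    · have hk17 : k = 16 := by omega
      subst hk17
      norm_num
    · have h1 := ih h
      have hp : (2:ℕ)^(k+1) = 2*2^k := by rw [pow_succ]; ring
      have hk2 : 17^2 ≤ k^2 := Nat.pow_le_pow_left h 2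
      have key : 3*(k+1+1)^2 + 2 ≤ 2*(3*(k+1)^2+2) := by nlinarith [hk2]
      have h2 : 2*(3*(k+1)^2+2) ≤ 2*2^k := by omega
      rw [hp]
      omega

/-! ### product bounds -/

lemma prod_le_general {K n m : ℕ} (hn : n + m ≤ K) (hK : 4 ≤ K) :
    ∏ t : Fin (n+1), (t.val + (n+2) * 2^m) ≤ 2^(3*(K+1)^2) := by
  have hfac : ∀ t : Fin (n+1), t.val + (n+2) * 2^m ≤ 2^(2*K+1) := by
    intro t
    have h1 : t.val ≤ K := by have := t.isLt; omega
    have h2 : n + 2 ≤ 2^K := by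
      have : n + 2 ≤ K + 2 := by omega
      exact this.trans (add_two_le_two_pow (by omega))
    have h3 : (2:ℕ)^m ≤ 2^K := Nat.pow_le_pow_right (by norm_num) (by omega)
    have h4 : (n+2) * 2^m ≤ 2^K * 2^K := Nat.mul_le_mul h2 h3
    have h5 : (2:ℕ)^K * 2^K = 2^(2*K) := by rw [← pow_add]; ring_nf
    have h6 : K ≤ 2^(2*K) := by
      have := (Nat.lt_two_pow_self (n := K))
      have h7 : (2:ℕ)^K ≤ 2^(2*K) := Nat.pow_le_pow_right (by norm_num) (by omega)
      omega
    have h8 : (2:ℕ)^(2*K+1) = 2^(2*K) + 2^(2*K) := by rw [pow_succ]; ring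
    omega
  calc ∏ t : Fin (n+1), (t.val + (n+2) * 2^m)
      ≤ (2^(2*K+1)) ^ (Finset.univ : Finset (Fin (n+1))).card :=
        Finset.prod_le_pow_card _ _ _ (fun t _ => hfac t)
    _ = 2^((2*K+1) * (n+1)) := by rw [Finset.card_univ, Fintype.card_fin, ← pow_mul]
    _ ≤ 2^(3*(K+1)^2) := by
        apply Nat.pow_le_pow_right (by norm_num)
        have ha : 2*K+1 ≤ 3*(K+1) := by omega
        have hb : n+1 ≤ K+1 := by omega
        calc (2*K+1) * (n+1) ≤ (3*(K+1)) * (K+1) := Nat.mul_le_mul ha hb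
          _ = 3*(K+1)^2 := by ring

lemma prod_le_four {n m : ℕ} (hn : n + m ≤ 4) :
    ∏ t : Fin (n+1), (t.val + (n+2) * 2^m) ≤ 30240 := by
  have hn4 : n ≤ 4 := by omega
  have hm4 : m ≤ 4 := by omega
  interval_cases n <;> interval_cases m <;> first | (exfalso; omega) | decide

/-! ### the base bound -/

lemma base_bound {k n m : ℕ} (hk : 4 ≤ k) (hn : n + m ≤ k) :
    2 * Nat.card (AtomCode n m) + 2 + 3*(k+1)^2 ≤ tower (2 + logStar k) := by
  rw [card_atom]
  rcases eq_or_lt_of_le hk with h4 | h5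
  · have hk4 : k = 4 := h4.symm
    subst hk4
    rw [logStar_four]
    have h1 := prod_le_four hn
    have h2 : tower (2 + 2) = 65536 := by decide
    rw [show (2+2 : ℕ) = 4 from rfl] at h2
    rw [h2]
    omega
  · have hk5 : 5 ≤ k := h5
    have hP := prod_le_general hn hk
    set E := 3*(k+1)^2 with hE
    have hE2 : E + 2 ≤ tower (1 + logStar k) := by
      have hkL : k ≤ tower (logStar k) := le_tower_logStar k
      have h16 : 16 ≤ tower (logStar k) := by
        have := tower_mono (logStar_ge_three hk5)
        have ht3 : tower 3 = 16 := by decide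
        omega
      have ht1 : tower (1 + logStar k) = 2 ^ tower (logStar k) := by
        rw [show 1 + logStar k = logStar k + 1 by omega, tower_succ]
      rw [ht1]
      rcases le_or_gt k 16 with h | h
      · have hE869 : E + 2 ≤ 869 := by rw [hE]; nlinarith
        have : (2:ℕ)^16 ≤ 2^(tower (logStar k)) := Nat.pow_le_pow_right (by norm_num) h16
        have h216 : (2:ℕ)^16 = 65536 := by norm_num
        omega
      · have := sq_bound (show 17 ≤ k by omega)
        have : (2:ℕ)^k ≤ 2^(tower (logStar k)) := Nat.pow_le_pow_right (by norm_num) hkL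
        have hsq := sq_bound (show 17 ≤ k by omega)
        omega
    have hEpos : 1 ≤ E := by rw [hE]; nlinarith
    have hEp : E < 2^E := (Nat.lt_two_pow_self (n := E))
    have h1 : 2 * (2^E) + 2 + E ≤ 2^(E+2) := by
      have : (2:ℕ)^(E+2) = 4 * 2^E := by rw [pow_add]; ring
      omega
    have h2 : (2:ℕ)^(E+2) ≤ 2^(tower (1 + logStar k)) :=
      Nat.pow_le_pow_right (by norm_num) hE2
    have h3 : tower (2 + logStar k) = 2 ^ tower (1 + logStar k) := by
      rw [show 2 + logStar k = (1 + logStar k) + 1 by omega, tower_succ]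
    omega

/-! ### the main inductive bound -/

lemma TS_bound {k : ℕ} (hk : 4 ≤ k) : ∀ (j n m : ℕ), j + (n + m) ≤ k →
    2 * Nat.card (TS j n m) + 2 + 3*(k+1)^2 ≤ tower (j + 2 + logStar k) := by
  intro j
  induction j with
  | zero =>
    intro n m h
    have h0 : Nat.card (TS 0 n m) = Nat.card (AtomCode n m) := rfl
    rw [h0, show (0:ℕ) + 2 + logStar k = 2 + logStar k by omega]
    exact base_bound hk (by omega)
  | succ j ih =>
    intro n m h
    set E := 3*(k+1)^2 with hE
    have hA := ih (n+1) m (by omega)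
    have hB := ih n (m+1) (by omega)
    set A := Nat.card (TS j (n+1) m) with hAdef
    set B := Nat.card (TS j n (m+1)) with hBdef
    have hc : Nat.card (AtomCode n m) ≤ 2^E := by
      rw [card_atom]; exact prod_le_general (by omega) hk
    have hcard : Nat.card (TS (j+1) n m) = Nat.card (AtomCode n m) * (2^A * 2^B) :=
      card_TS_succ j n m
    set Tw := tower (j + 2 + logStar k) with hTw
    have hT : tower (j + 1 + 2 + logStar k) = 2^Tw := by
      rw [show j + 1 + 2 + logStar k = (j + 2 + logStar k) + 1 by omega, tower_succ]
    have hABE : A + B + E + 2 ≤ Tw := by omega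
    have hEp : E < 2^E := (Nat.lt_two_pow_self (n := E))
    have hmul : Nat.card (TS (j+1) n m) ≤ 2^E * (2^A * 2^B) := by
      rw [hcard]; exact Nat.mul_le_mul_right _ hc
    have hpow : (2:ℕ)^E * (2^A * 2^B) = 2^(A+B+E) := by
      rw [pow_add, pow_add]; ring
    rw [hpow] at hmul
    have hX2 : (2:ℕ)^(A+B+E+1) = 2 * 2^(A+B+E) := by rw [pow_succ]; ring
    have hX3 : (2:ℕ)^(A+B+E+2) = 2 * 2^(A+B+E+1) := by rw [pow_succ]; ring
    have h2E : (2:ℕ)^E ≤ 2^(A+B+E) := Nat.pow_le_pow_right (by norm_num) (by omega)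
    have hfin : (2:ℕ)^(A+B+E+2) ≤ 2^Tw := Nat.pow_le_pow_right (by norm_num) hABE
    rw [hT]
    omega

/-- `T ≡ₖ^{MSO;tr} T'`: the two rooted trees satisfy the same MSO sentences of
quantifier depth at most `k`. -/
def MSOTreeEquiv (k : ℕ) (T T' : FinRootedTree) : Prop :=
  ∀ φ : TreeForm 0 0, φ.depth ≤ k →
    (TreeForm.Sat T φ (fun i => i.elim0) (fun i => i.elim0) ↔
      TreeForm.Sat T' φ (fun i => i.elim0) (fun i => i.elim0))

def msoTreeSetoid (k : ℕ) : Setoid FinRootedTree where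
  r := MSOTreeEquiv k
  iseqv := ⟨fun _ _ _ => Iff.rfl, fun h φ hφ => (h φ hφ).symm,
    fun h1 h2 φ hφ => (h1 φ hφ).trans (h2 φ hφ)⟩

/-- The set of `≡ₖ^{MSO;tr}`-equivalence classes of finite rooted trees. -/
def MSOTreeClasses (k : ℕ) : Type := Quotient (msoTreeSetoid k)

def singleTree : FinRootedTree where
  n := 1
  graph := ⊥
  isTree := by
    constructor
    · constructor
      intro u v
      have : u = v := Subsingleton.elim u v
      exact this ▸ SimpleGraph.Reachable.refl u
    · intro v c hc
      cases c with
      | nil => exact hc.ne_nil rfl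
      | cons h p => exact h
  root := 0

/-- for every integer `k ≥ 4`, the number of `≡ₖ^{MSO;tr}`-classes
of finite rooted trees is at most `tower (k + 2 + logStar k)`. -/
theorem mso_tree_classes_bound (k : ℕ) (hk : 4 ≤ k) :
    Finite (MSOTreeClasses k) ∧
      Nat.card (MSOTreeClasses k) ≤ tower (k + 2 + logStar k) := by
  haveI : Finite (TS k 0 0) := TS_finite k 0 0
  set f : FinRootedTree → TS k 0 0 :=
    fun T => theory k T (fun i => i.elim0) (fun i => i.elim0) with hf_def
  have hf : ∀ T T', f T = f T' → MSOTreeEquiv k T T' := fun T T' h φ hφ =>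
    satIff φ k hφ T T' _ _ _ _ h
  let g : TS k 0 0 → MSOTreeClasses k := fun τ =>
    if h : ∃ T, f T = τ then Quotient.mk (msoTreeSetoid k) h.choose
    else Quotient.mk (msoTreeSetoid k) singleTree
  have hg : Function.Surjective g := by
    intro q
    induction q using Quotient.inductionOn with
    | h T =>
      refine ⟨f T, ?_⟩
      have hex : ∃ T0, f T0 = f T := ⟨T, rfl⟩
      show (if h : ∃ T0, f T0 = f T then Quotient.mk (msoTreeSetoid k) h.choose
        else Quotient.mk (msoTreeSetoid k) singleTree) = Quotient.mk (msoTreeSetoid k) T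
      rw [dif_pos hex]
      exact Quotient.sound (hf _ _ hex.choose_spec)
  constructor
  · exact Finite.of_surjective g hg
  · have h1 : Nat.card (MSOTreeClasses k) ≤ Nat.card (TS k 0 0) :=
      Nat.card_le_card_of_surjective g hg
    have h2 := TS_bound hk k 0 0 (by omega)
    omega
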